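/- arXiv:2409.09519 — 2 statements merged into one kernel-verified Lean document; each statement's English description precedes it below -/
import Mathlib

section
/- Let m > 0, γ > 0, ν > 0, and let g : [0,∞) → ℝ be bounded and continuous. Then lim_{ε→0⁺} ∫₀^∞ (mε)^{−1/2} · exp(−(γ + √(γ² + 4ν/(mε)))·s/2) · g(s) ds = ν^{−1/2} · g(0). In other words, the kernel s ↦ (mε)^{−1/2}·exp(−(γ+Γ_ε)s/2) with Γ_ε = √(γ² + 4ν/(mε)) converges, as ε → 0⁺, to ν^{−1/2} times the Dirac delta at 0. -/
open Filter MeasureTheory Topology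

lemma exp_neg_mul_integral_Ioi' {b : ℝ} (hb : 0 < b) (a : ℝ) :
    ∫ x in Set.Ioi a, Real.exp (-(b * x)) = Real.exp (-(b * a)) / b := by
  have h := MeasureTheory.integral_comp_mul_left_Ioi (fun u => Real.exp (-u)) a hb
  simp only [smul_eq_mul] at h
  rw [h, integral_exp_neg_Ioi]
  ring

lemma sqrt_tendsto_atTop' : Tendsto Real.sqrt atTop atTop := by
  apply tendsto_atTop_atTop.mpr
  intro b
  refine ⟨b ^ 2, fun a ha => ?_⟩
  calc b ≤ |b| := le_abs_self b
    _ = Real.sqrt (b ^ 2) := (Real.sqrt_sq_eq_abs b).symm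
    _ ≤ Real.sqrt a := Real.sqrt_le_sqrt ha

lemma integral_Icc_exp_neg' {b : ℝ} (hb : 0 < b) :
    ∫ x in Set.Icc (0:ℝ) 1, b * Real.exp (-(b * x)) = 1 - Real.exp (-b) := by
  have hint : IntegrableOn (fun x => Real.exp (-(b * x))) (Set.Ioi 0) := by
    simpa [neg_mul] using exp_neg_integrableOn_Ioi 0 hb
  have hsplit : (∫ x in Set.Ioi (0:ℝ), Real.exp (-(b * x))) =
      (∫ x in Set.Ioc (0:ℝ) 1, Real.exp (-(b * x))) +
      ∫ x in Set.Ioi (1:ℝ), Real.exp (-(b * x)) := by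
    rw [← Set.Ioc_union_Ioi_eq_Ioi (zero_le_one)]
    exact setIntegral_union (Set.Ioc_disjoint_Ioi le_rfl) measurableSet_Ioi
      (hint.mono_set Set.Ioc_subset_Ioi_self)
      (hint.mono_set (Set.Ioi_subset_Ioi zero_le_one))
  rw [exp_neg_mul_integral_Ioi' hb 0, exp_neg_mul_integral_Ioi' hb 1] at hsplit
  have hIoc : ∫ x in Set.Ioc (0:ℝ) 1, Real.exp (-(b * x)) =
      Real.exp (-(b * 0)) / b - Real.exp (-(b * 1)) / b := by linarith
  rw [integral_Icc_eq_integral_Ioc, integral_const_mul, hIoc, mul_zero, mul_one,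
    neg_zero, Real.exp_zero]
  field_simp

lemma mul_exp_neg_tendsto_zero' {δ : ℝ} (hδ : 0 < δ) :
    Tendsto (fun t : ℝ => t * Real.exp (-(t * δ))) atTop (𝓝 0) := by
  have h := Real.tendsto_pow_mul_exp_neg_atTop_nhds_zero 1
  have h2 : Tendsto (fun t : ℝ => δ * t) atTop atTop :=
    Tendsto.const_mul_atTop hδ tendsto_id
  have h3 := (h.comp h2).const_mul δ⁻¹
  rw [mul_zero] at h3
  refine h3.congr fun t => ?_
  simp only [Function.comp_apply, pow_one]
  field_simp

/-- Timescale-separation limit: as `ε → 0⁺`, the kernel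
`s ↦ (mε)^{-1/2}·exp(-(γ + √(γ² + 4ν/(mε)))·s/2)` acts on a bounded continuous
function `g` on `[0,∞)` like `ν^{-1/2}` times the Dirac delta at `0`. -/
theorem kernel_tendsto_delta
    (m γ ν : ℝ) (hm : 0 < m) (hγ : 0 < γ) (hν : 0 < ν)
    (g : ℝ → ℝ)
    (hgc : ContinuousOn g (Set.Ici 0))
    (hgb : ∃ M : ℝ, ∀ s ≥ (0 : ℝ), |g s| ≤ M) :
    Tendsto
      (fun ε : ℝ =>
        ∫ s in Set.Ioi (0 : ℝ),
          (Real.sqrt (m * ε))⁻¹ *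
            Real.exp (-(γ + Real.sqrt (γ ^ 2 + 4 * ν / (m * ε))) * s / 2) * g s)
      (nhdsWithin 0 (Set.Ioi 0))
      (nhds ((Real.sqrt ν)⁻¹ * g 0)) := by
  obtain ⟨M, hM⟩ := hgb
  have hM0 : 0 ≤ M := le_trans (abs_nonneg _) (hM 0 le_rfl)
  set l : Filter ℝ := nhdsWithin 0 (Set.Ioi 0) with hl
  set L : ℝ → ℝ := fun ε => (γ + Real.sqrt (γ ^ 2 + 4 * ν / (m * ε))) / 2 with hLdef
  have hLpos : ∀ ε, 0 < L ε := by
    intro ε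
    have := Real.sqrt_nonneg (γ ^ 2 + 4 * ν / (m * ε))
    simp only [hLdef]
    linarith
  -- L → ∞
  have hLtop : Tendsto L l atTop := by
    have h1 : Tendsto (fun ε : ℝ => 4 * ν / (m * ε)) l atTop := by
      have : Tendsto (fun ε : ℝ => ε⁻¹) l atTop := tendsto_inv_nhdsGT_zero
      have h2 := Tendsto.const_mul_atTop (show (0:ℝ) < 4 * ν / m by positivity) this
      refine h2.congr fun ε => ?_
      field_simp
    have h2 : Tendsto (fun ε : ℝ => γ ^ 2 + 4 * ν / (m * ε)) l atTop :=
      tendsto_atTop_add_const_left _ _ h1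
    have h3 := sqrt_tendsto_atTop'.comp h2
    have h4 : Tendsto (fun ε : ℝ => γ + Real.sqrt (γ ^ 2 + 4 * ν / (m * ε))) l atTop :=
      tendsto_atTop_add_const_left _ _ h3
    exact h4.atTop_div_const (by norm_num)
  -- exp(-L) → 0
  have hexpL : Tendsto (fun ε => Real.exp (-(L ε))) l (𝓝 0) :=
    Real.tendsto_exp_neg_atTop_nhds_zero.comp hLtop
  -- the normalizing constant
  set c : ℝ → ℝ := fun ε => (Real.sqrt (m * ε))⁻¹ / L ε with hcdef
  have hceq : ∀ ε ∈ Set.Ioi (0:ℝ), c ε =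
      ((γ * Real.sqrt (m * ε) + Real.sqrt (m * ε * γ ^ 2 + 4 * ν)) / 2)⁻¹ := by
    intro ε hε
    have hmε : 0 < m * ε := mul_pos hm hε
    have hsq : Real.sqrt (m * ε) * Real.sqrt (γ ^ 2 + 4 * ν / (m * ε)) =
        Real.sqrt (m * ε * γ ^ 2 + 4 * ν) := by
      rw [← Real.sqrt_mul hmε.le]
      have hε0 : ε ≠ 0 := ne_of_gt hε
      congr 1
      field_simp
    have hD : Real.sqrt (m * ε) * L ε =
        (γ * Real.sqrt (m * ε) + Real.sqrt (m * ε * γ ^ 2 + 4 * ν)) / 2 := by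
      simp only [hLdef]
      rw [← hsq]
      ring
    rw [hcdef]
    simp only
    rw [div_eq_mul_inv, ← mul_inv, hD]
  have hc : Tendsto c l (𝓝 (Real.sqrt ν)⁻¹) := by
    have hcont : Continuous (fun ε : ℝ =>
        (γ * Real.sqrt (m * ε) + Real.sqrt (m * ε * γ ^ 2 + 4 * ν)) / 2) := by
      fun_prop
    have hval : ((γ * Real.sqrt (m * 0) + Real.sqrt (m * 0 * γ ^ 2 + 4 * ν)) / 2)
        = Real.sqrt ν := by
      have h2 : Real.sqrt 4 = 2 := by
        rw [show (4:ℝ) = 2 ^ 2 by norm_num, Real.sqrt_sq (by norm_num : (0:ℝ) ≤ 2)]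
      have h4 : Real.sqrt (4 * ν) = 2 * Real.sqrt ν := by
        rw [Real.sqrt_mul (by norm_num : (0:ℝ) ≤ 4), h2]
      rw [mul_zero, zero_mul, zero_add, Real.sqrt_zero, mul_zero, zero_add, h4]
      ring
    have hD : Tendsto (fun ε : ℝ =>
        (γ * Real.sqrt (m * ε) + Real.sqrt (m * ε * γ ^ 2 + 4 * ν)) / 2) l
        (𝓝 (Real.sqrt ν)) := by
      have := hcont.tendsto 0
      rw [hval] at this
      exact this.mono_left nhdsWithin_le_nhds
    have hνne : Real.sqrt ν ≠ 0 := (Real.sqrt_pos.mpr hν).ne'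
    have := hD.inv₀ hνne
    refine this.congr' ?_
    filter_upwards [self_mem_nhdsWithin] with ε hε
    exact (hceq ε hε).symm
  -- the peak functions
  set φ : ℝ → ℝ → ℝ := fun ε s => L ε * Real.exp (-(L ε * s)) with hφdef
  -- integral of φ over Icc 0 1
  have hIccφ : ∀ ε, ∫ x in Set.Icc (0:ℝ) 1, φ ε x = 1 - Real.exp (-(L ε)) := fun ε =>
    integral_Icc_exp_neg' (hLpos ε)
  have hiφ : Tendsto (fun ε => ∫ x in Set.Icc (0:ℝ) 1, φ ε x) l (𝓝 1) := by
    have : Tendsto (fun ε => 1 - Real.exp (-(L ε))) l (𝓝 (1 - 0)) :=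
      tendsto_const_nhds.sub hexpL
    rw [sub_zero] at this
    exact this.congr fun ε => (hIccφ ε).symm
  -- uniform convergence of φ to 0 away from 0
  have hlφ : ∀ u : Set ℝ, IsOpen u → (0:ℝ) ∈ u →
      TendstoUniformlyOn φ 0 l (Set.Icc 0 1 \ u) := by
    intro u hu h0u
    obtain ⟨δ, hδ, hball⟩ := Metric.isOpen_iff.mp hu 0 h0u
    rw [Metric.tendstoUniformlyOn_iff]
    intro η hη
    have hcomp : Tendsto (fun ε => L ε * Real.exp (-(L ε * δ))) l (𝓝 0) :=
      (mul_exp_neg_tendsto_zero' hδ).comp hLtop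
    rw [Metric.tendsto_nhds] at hcomp
    filter_upwards [hcomp η hη] with ε hε x hx
    have hxδ : δ ≤ x := by
      by_contra h
      push_neg at h
      have hx0 : 0 ≤ x := hx.1.1
      have : x ∈ Metric.ball (0:ℝ) δ := by
        simp [Real.dist_eq, abs_of_nonneg hx0, h]
      exact hx.2 (hball this)
    have hb := hLpos ε
    have hφle : φ ε x ≤ L ε * Real.exp (-(L ε * δ)) := by
      simp only [hφdef]
      apply mul_le_mul_of_nonneg_left _ hb.le
      exact Real.exp_le_exp.mpr (by nlinarith)
    have hφnn : 0 ≤ φ ε x := by positivity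
    rw [Real.dist_eq] at hε ⊢
    simp only [Pi.zero_apply]
    rw [abs_sub_comm, sub_zero, abs_of_nonneg hφnn]
    calc φ ε x ≤ L ε * Real.exp (-(L ε * δ)) := hφle
      _ ≤ |L ε * Real.exp (-(L ε * δ)) - 0| := by rw [sub_zero]; exact le_abs_self _
      _ < η := hε
  -- the peak function theorem
  have hmg : IntegrableOn g (Set.Icc (0:ℝ) 1) :=
    (hgc.mono (Set.Icc_subset_Ici_self)).integrableOn_compact isCompact_Icc
  have hcg : Tendsto g (nhdsWithin 0 (Set.Icc (0:ℝ) 1)) (𝓝 (g 0)) :=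
    (hgc 0 Set.self_mem_Ici).mono_left
      (nhdsWithin_mono 0 Set.Icc_subset_Ici_self)
  have hpeak : Tendsto (fun ε => ∫ x in Set.Icc (0:ℝ) 1, φ ε x • g x) l (𝓝 (g 0)) := by
    apply tendsto_setIntegral_peak_smul_of_integrableOn_of_tendsto
      measurableSet_Icc measurableSet_Icc subset_rfl self_mem_nhdsWithin
      (by simp : volume (Set.Icc (0:ℝ) 1) ≠ ⊤)
      (Eventually.of_forall fun ε x _ => by positivity)
      hlφ hiφ
      (Eventually.of_forall fun ε => (by fun_prop : Continuous (φ ε)).aestronglyMeasurable)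
      hmg hcg
  -- tail estimate
  have htail : Tendsto (fun ε => ∫ s in Set.Ioi (1:ℝ),
      (Real.sqrt (m * ε))⁻¹ *
        Real.exp (-(γ + Real.sqrt (γ ^ 2 + 4 * ν / (m * ε))) * s / 2) * g s) l (𝓝 0) := by
    have hbnd : Tendsto (fun ε => c ε * Real.exp (-(L ε)) * M) l (𝓝 ((Real.sqrt ν)⁻¹ * 0 * M)) :=
      (hc.mul hexpL).mul tendsto_const_nhds
    rw [mul_zero, zero_mul] at hbnd
    apply squeeze_zero_norm' _ hbnd
    filter_upwards [self_mem_nhdsWithin] with ε hε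
    have hb := hLpos ε
    have harg : ∀ s : ℝ, -(γ + Real.sqrt (γ ^ 2 + 4 * ν / (m * ε))) * s / 2 = -(L ε * s) := by
      intro s; simp only [hLdef]; ring
    have hdomint : Integrable (fun s => (Real.sqrt (m * ε))⁻¹ * M * Real.exp (-(L ε * s)))
        (volume.restrict (Set.Ioi (1:ℝ))) := by
      have h2 : IntegrableOn (fun s => Real.exp (-(L ε * s))) (Set.Ioi 1) := by
        simpa [neg_mul] using exp_neg_integrableOn_Ioi 1 hb
      exact h2.const_mul _
    have hnorm : ‖∫ s in Set.Ioi (1:ℝ),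
        (Real.sqrt (m * ε))⁻¹ *
          Real.exp (-(γ + Real.sqrt (γ ^ 2 + 4 * ν / (m * ε))) * s / 2) * g s‖ ≤
        ∫ s in Set.Ioi (1:ℝ), (Real.sqrt (m * ε))⁻¹ * M * Real.exp (-(L ε * s)) := by
      apply norm_integral_le_of_norm_le hdomint
      filter_upwards [self_mem_ae_restrict measurableSet_Ioi] with s hs
      have hs0 : (0:ℝ) ≤ s := le_of_lt (lt_trans zero_lt_one hs)
      rw [harg s, Real.norm_eq_abs, abs_mul, abs_mul]
      have h1 : |(Real.sqrt (m * ε))⁻¹| = (Real.sqrt (m * ε))⁻¹ := abs_of_nonneg (by positivity)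
      have h2 : |Real.exp (-(L ε * s))| = Real.exp (-(L ε * s)) := abs_of_nonneg (Real.exp_pos _).le
      rw [h1, h2]
      calc (Real.sqrt (m * ε))⁻¹ * Real.exp (-(L ε * s)) * |g s|
          ≤ (Real.sqrt (m * ε))⁻¹ * Real.exp (-(L ε * s)) * M := by
            gcongr; exact hM s hs0
        _ = (Real.sqrt (m * ε))⁻¹ * M * Real.exp (-(L ε * s)) := by ring
    have hval : ∫ s in Set.Ioi (1:ℝ), (Real.sqrt (m * ε))⁻¹ * M * Real.exp (-(L ε * s)) =
        c ε * Real.exp (-(L ε)) * M := by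
      rw [integral_const_mul, exp_neg_mul_integral_Ioi' hb 1, mul_one]
      rw [hcdef]
      simp only
      field_simp
    calc ‖∫ s in Set.Ioi (1:ℝ),
        (Real.sqrt (m * ε))⁻¹ *
          Real.exp (-(γ + Real.sqrt (γ ^ 2 + 4 * ν / (m * ε))) * s / 2) * g s‖
        ≤ ∫ s in Set.Ioi (1:ℝ), (Real.sqrt (m * ε))⁻¹ * M * Real.exp (-(L ε * s)) := hnorm
      _ = c ε * Real.exp (-(L ε)) * M := hval
  -- splitting identity
  have hsplit : ∀ᶠ ε in l,
      (∫ s in Set.Ioi (0:ℝ),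
        (Real.sqrt (m * ε))⁻¹ *
          Real.exp (-(γ + Real.sqrt (γ ^ 2 + 4 * ν / (m * ε))) * s / 2) * g s) =
      c ε * (∫ x in Set.Icc (0:ℝ) 1, φ ε x • g x) +
      ∫ s in Set.Ioi (1:ℝ),
        (Real.sqrt (m * ε))⁻¹ *
          Real.exp (-(γ + Real.sqrt (γ ^ 2 + 4 * ν / (m * ε))) * s / 2) * g s := by
    filter_upwards [self_mem_nhdsWithin] with ε hε
    have hb := hLpos ε
    have harg : ∀ s : ℝ, -(γ + Real.sqrt (γ ^ 2 + 4 * ν / (m * ε))) * s / 2 = -(L ε * s) := by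
      intro s; simp only [hLdef]; ring
    set F : ℝ → ℝ := fun s => (Real.sqrt (m * ε))⁻¹ *
        Real.exp (-(γ + Real.sqrt (γ ^ 2 + 4 * ν / (m * ε))) * s / 2) * g s with hFdef
    have hFasm : AEStronglyMeasurable F (volume.restrict (Set.Ioi (0:ℝ))) := by
      apply AEStronglyMeasurable.mul
      · exact ((by fun_prop : Continuous (fun s : ℝ => (Real.sqrt (m * ε))⁻¹ *
          Real.exp (-(γ + Real.sqrt (γ ^ 2 + 4 * ν / (m * ε))) * s / 2)))).aestronglyMeasurable
      · exact ((hgc.mono Set.Ioi_subset_Ici_self).aestronglyMeasurable measurableSet_Ioi)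
    have hFint : IntegrableOn F (Set.Ioi (0:ℝ)) := by
      have hdom : Integrable (fun s => (Real.sqrt (m * ε))⁻¹ * M * Real.exp (-(L ε * s)))
          (volume.restrict (Set.Ioi (0:ℝ))) := by
        have := exp_neg_integrableOn_Ioi 0 hb
        have h2 : IntegrableOn (fun s => Real.exp (-(L ε * s))) (Set.Ioi (0:ℝ)) := by
          simpa [neg_mul] using this
        exact h2.const_mul _
      apply Integrable.mono' hdom hFasm
      filter_upwards [self_mem_ae_restrict measurableSet_Ioi] with s hs
      have hs0 : (0:ℝ) ≤ s := le_of_lt hs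
      rw [hFdef]
      simp only
      rw [harg s, Real.norm_eq_abs, abs_mul, abs_mul,
        abs_of_nonneg (show (0:ℝ) ≤ (Real.sqrt (m * ε))⁻¹ by positivity),
        abs_of_nonneg (Real.exp_pos _).le]
      calc (Real.sqrt (m * ε))⁻¹ * Real.exp (-(L ε * s)) * |g s|
          ≤ (Real.sqrt (m * ε))⁻¹ * Real.exp (-(L ε * s)) * M := by
            gcongr; exact hM s hs0
        _ = (Real.sqrt (m * ε))⁻¹ * M * Real.exp (-(L ε * s)) := by ring
    have hu : (∫ s in Set.Ioi (0:ℝ), F s) =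
        (∫ s in Set.Ioc (0:ℝ) 1, F s) + ∫ s in Set.Ioi (1:ℝ), F s := by
      rw [← Set.Ioc_union_Ioi_eq_Ioi (zero_le_one)]
      exact setIntegral_union (Set.Ioc_disjoint_Ioi le_rfl) measurableSet_Ioi
        (hFint.mono_set Set.Ioc_subset_Ioi_self)
        (hFint.mono_set (Set.Ioi_subset_Ioi zero_le_one))
    have hIcc : (∫ s in Set.Ioc (0:ℝ) 1, F s) = c ε * ∫ x in Set.Icc (0:ℝ) 1, φ ε x • g x := by
      rw [← integral_Icc_eq_integral_Ioc]
      rw [← integral_const_mul]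
      apply setIntegral_congr_fun measurableSet_Icc
      intro x _
      rw [hFdef]
      simp only [smul_eq_mul, hφdef, hcdef]
      rw [harg x]
      have hε' : (0:ℝ) < ε := hε
      have h1 : (0:ℝ) < Real.sqrt (m * ε) := Real.sqrt_pos.mpr (mul_pos hm hε')
      field_simp
    rw [hu, hIcc]
  -- conclusion
  have hrhs : Tendsto (fun ε =>
      c ε * (∫ x in Set.Icc (0:ℝ) 1, φ ε x • g x) +
      ∫ s in Set.Ioi (1:ℝ),
        (Real.sqrt (m * ε))⁻¹ *
          Real.exp (-(γ + Real.sqrt (γ ^ 2 + 4 * ν / (m * ε))) * s / 2) * g s) l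
      (𝓝 ((Real.sqrt ν)⁻¹ * g 0)) := by
    have := (hc.mul hpeak).add htail
    rwa [add_zero] at this
  exact hrhs.congr' (EventuallyEq.symm hsplit)
end

section
/- Let N = n_S + n_F and let J be a real symmetric N×N matrix with nonnegative off-diagonal entries, J·1_N = 0, partitioned into blocks J_SS, J_SF, J_FS = J_SFᵀ, J_FF, and suppose J_FF is negative definite. Then the off-diagonal entries of the Kron-reduced matrix J_red = J_SS − J_SF·J_FF⁻¹·J_FS are nonnegative; together with J_red·1_{n_S} = 0 and symmetry, this means that −J_red is again a Laplacian matrix. -/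
open Matrix

/-- inverse of a symmetric M-matrix applied to a nonneg vector is nonneg -/
lemma mmatrix_inv_nonneg {n : ℕ} (A : Matrix (Fin n) (Fin n) ℝ)
    (hA : A.PosDef) (hz : ∀ i j : Fin n, i ≠ j → A i j ≤ 0)
    (b : Fin n → ℝ) (hb : ∀ i, 0 ≤ b i) :
    ∀ i, 0 ≤ (A⁻¹ *ᵥ b) i := by
  set x : Fin n → ℝ := A⁻¹ *ᵥ b with hx
  have hAx : A *ᵥ x = b := by
    rw [hx, mulVec_mulVec, mul_nonsing_inv _ (isUnit_iff_isUnit_det _ |>.mp hA.isUnit), one_mulVec]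
  set d : Fin n → ℝ := fun i => max (-x i) 0 with hd
  set p : Fin n → ℝ := fun i => max (x i) 0 with hp
  have hdn : ∀ i, 0 ≤ d i := fun i => le_max_right _ _
  have hpn : ∀ i, 0 ≤ p i := fun i => le_max_right _ _
  have hsplit : ∀ i, x i = p i - d i := by
    intro i; simp [hp, hd, max_def]; split_ifs with h1 h2 h2 <;> linarith
  have hdis : ∀ i, p i * d i = 0 := by
    intro i
    rcases le_total (x i) 0 with h | h
    · have : p i = 0 := max_eq_right h
      simp [this]
    · have : d i = 0 := max_eq_right (by linarith)
      simp [this]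
  -- key identity: p ⬝ᵥ (A *ᵥ d) = d ⬝ᵥ (A *ᵥ d) + d ⬝ᵥ (A *ᵥ x)
  have hkey : p ⬝ᵥ (A *ᵥ d) = d ⬝ᵥ (A *ᵥ d) + d ⬝ᵥ b := by
    have hxs : (fun i => x i + d i) = p := by funext i; rw [hsplit i]; ring
    have hsymA : Aᵀ = A := hA.isHermitian
    calc p ⬝ᵥ (A *ᵥ d) = x ⬝ᵥ (A *ᵥ d) + d ⬝ᵥ (A *ᵥ d) := by
          rw [← hxs]; simp [dotProduct, Finset.sum_add_distrib, add_mul]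
      _ = d ⬝ᵥ (A *ᵥ x) + d ⬝ᵥ (A *ᵥ d) := by
          rw [dotProduct_mulVec, ← mulVec_transpose, hsymA, dotProduct_comm]
      _ = d ⬝ᵥ (A *ᵥ d) + d ⬝ᵥ b := by rw [hAx]; ring
  have hle : p ⬝ᵥ (A *ᵥ d) ≤ 0 := by
    simp only [dotProduct, mulVec, Finset.mul_sum]
    apply Finset.sum_nonpos; intro i _
    apply Finset.sum_nonpos; intro k _
    rcases eq_or_ne i k with rfl | h
    · have : p i * (A i i * d i) = A i i * (p i * d i) := by ring
      rw [this, hdis i, mul_zero]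
    · nlinarith [hz i k h, mul_nonneg (hpn i) (hdn k)]
  have hdb : 0 ≤ d ⬝ᵥ b := Finset.sum_nonneg fun i _ => mul_nonneg (hdn i) (hb i)
  have hquad : d ⬝ᵥ (A *ᵥ d) ≤ 0 := by linarith
  have hd0 : d = 0 := by
    by_contra h
    have := hA.dotProduct_mulVec_pos h
    simp only [star_trivial] at this
    linarith
  intro i
  have := hsplit i
  rw [hd0] at this
  simp at this
  rw [hx] at this ⊢
  rw [this]; exact hpn i

/-- The Kron reduction of (the negative of) a Laplacian matrix is again (the
negative of) a Laplacian matrix: if `J` is symmetric with nonnegative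
off-diagonal entries and zero row sums, and its fast-fast block `J_FF` is
negative definite, then `J_red = J_SS − J_SF·J_FF⁻¹·J_SFᵀ` is symmetric, has
nonnegative off-diagonal entries and zero row sums. -/
theorem kron_reduction_laplacian
    (nS nF : ℕ)
    (Jss : Matrix (Fin nS) (Fin nS) ℝ) (Jsf : Matrix (Fin nS) (Fin nF) ℝ)
    (Jfs : Matrix (Fin nF) (Fin nS) ℝ) (Jff : Matrix (Fin nF) (Fin nF) ℝ)
    (hfs : Jfs = Jsfᵀ)
    (hsym : (Matrix.fromBlocks Jss Jsf Jfs Jff).IsSymm)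
    (hoff : ∀ i j : Fin nS ⊕ Fin nF, i ≠ j →
      0 ≤ Matrix.fromBlocks Jss Jsf Jfs Jff i j)
    (hones : (Matrix.fromBlocks Jss Jsf Jfs Jff) *ᵥ (fun _ => (1 : ℝ)) = 0)
    (hnd : (-Jff).PosDef) :
    (∀ i j : Fin nS, i ≠ j → 0 ≤ (Jss - Jsf * Jff⁻¹ * Jfs) i j) ∧
    (Jss - Jsf * Jff⁻¹ * Jfs) *ᵥ (fun _ => (1 : ℝ)) = 0 ∧
    (Jss - Jsf * Jff⁻¹ * Jfs).IsSymm := by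
  -- symmetry of the blocks
  have hblocks := hsym
  rw [Matrix.IsSymm, fromBlocks_transpose, fromBlocks_inj] at hblocks
  obtain ⟨hJss, -, -, hJff⟩ := hblocks
  -- invertibility of Jff
  have hu : IsUnit Jff := by
    have := hnd.isUnit
    rwa [IsUnit.neg_iff] at this
  have hdet : IsUnit Jff.det := (isUnit_iff_isUnit_det _).mp hu
  -- Jff⁻¹ = -(-Jff)⁻¹
  have hinv : (-Jff)⁻¹ = -(Jff⁻¹) :=
    inv_eq_right_inv (by rw [neg_mul_neg, mul_nonsing_inv _ hdet])
  have hinvneg : Jff⁻¹ = -(-Jff)⁻¹ := by rw [hinv, neg_neg]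
  -- entries of (-Jff)⁻¹ are nonnegative
  have hzoff : ∀ k l : Fin nF, k ≠ l → (-Jff) k l ≤ 0 := by
    intro k l hkl
    have := hoff (Sum.inr k) (Sum.inr l) (by simpa using hkl)
    simp only [fromBlocks_apply₂₂] at this
    simpa using this
  have hinvnn : ∀ k l : Fin nF, 0 ≤ (-Jff)⁻¹ k l := by
    intro k l
    have := mmatrix_inv_nonneg (-Jff) hnd hzoff (Pi.single l 1)
      (fun i => by simp only [Pi.single_apply]; split_ifs <;> norm_num) k
    simpa [mulVec_single] using this
  -- Jsf entries are nonnegative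
  have hJsfnn : ∀ i k, 0 ≤ Jsf i k := by
    intro i k
    have := hoff (Sum.inl i) (Sum.inr k) (by simp)
    simpa using this
  -- row sums of the blocks
  have hu1 : (fun _ => (1 : ℝ) : Fin nS ⊕ Fin nF → ℝ) =
      Sum.elim (fun _ => (1 : ℝ)) (fun _ => (1 : ℝ)) := by
    funext i; cases i <;> rfl
  rw [hu1, fromBlocks_mulVec] at hones
  have hS : Jss *ᵥ (fun _ => (1 : ℝ)) + Jsf *ᵥ (fun _ => (1 : ℝ)) = 0 := by
    funext i; exact congrFun hones (Sum.inl i)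
  have hF : Jfs *ᵥ (fun _ => (1 : ℝ)) + Jff *ᵥ (fun _ => (1 : ℝ)) = 0 := by
    funext k; exact congrFun hones (Sum.inr k)
  refine ⟨?_, ?_, ?_⟩
  · -- off-diagonal entries nonnegative
    intro i j hij
    have hJssij : 0 ≤ Jss i j := by
      have := hoff (Sum.inl i) (Sum.inl j) (by simpa using hij)
      simpa using this
    have hterm : 0 ≤ (Jsf * (-Jff)⁻¹ * Jsfᵀ) i j := by
      rw [mul_apply]
      apply Finset.sum_nonneg; intro l _
      apply mul_nonneg _ (hJsfnn j l)
      rw [mul_apply]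
      exact Finset.sum_nonneg fun k _ => mul_nonneg (hJsfnn i k) (hinvnn k l)
    have : (Jss - Jsf * Jff⁻¹ * Jfs) i j
        = Jss i j + (Jsf * (-Jff)⁻¹ * Jsfᵀ) i j := by
      rw [hfs, hinvneg]
      simp [mul_neg, neg_mul, Matrix.sub_apply]
    rw [this]
    positivity
  · -- zero row sums
    have h1 : Jfs *ᵥ (fun _ => (1 : ℝ)) = -(Jff *ᵥ (fun _ => (1 : ℝ))) := by
      rw [eq_neg_iff_add_eq_zero]; exact hF
    have h2 : (Jsf * Jff⁻¹ * Jfs) *ᵥ (fun _ => (1 : ℝ))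
        = -(Jsf *ᵥ (fun _ => (1 : ℝ))) := by
      rw [← mulVec_mulVec, ← mulVec_mulVec, h1, mulVec_neg, mulVec_mulVec,
        nonsing_inv_mul _ hdet, one_mulVec, mulVec_neg]
    rw [sub_mulVec, h2, sub_neg_eq_add, hS]
  · -- symmetry
    rw [Matrix.IsSymm, transpose_sub, transpose_mul, transpose_mul,
      transpose_nonsing_inv, hfs, hJff, transpose_transpose, hJss, ← Matrix.mul_assoc]
end
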